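/- Let G = (V, E) be a hypergraph with a linear order < on the edge set E, and let f be a function assigning to each edge subset A ⊆ E an element f(G, A) of an additive abelian group such that for all A ⊆ E and all e ∈ E \ A: if k(G[A]) = k(G[A ∪ {e}]) then f(G, A) = -f(G, A ∪ {e}). For a broken cycle B ∈ 𝔅(G, <), let ē(B) denote the maximal edge (with respect to <) such that B ∪ {ē(B)} is the edge set of a δ-cycle in G. Let 𝒟' ⊆ 𝔅(G, <) and let B ∈ 𝔅(G, <) satisfy ē(B) ≮ ē(B') for all B' ∈ 𝒟'. Then Σ f(G, A) = 0, where the sum ranges over all A ⊆ E such that B ⊆ A and B' ⊄ A for all B' ∈ 𝒟'. -/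

import Mathlib

open scoped Classical

/-- A hypergraph with vertex type `α` and edges indexed by elements of `ι`
(the indexing allows parallel edges, i.e. a multiset of edges). Every edge is a
nonempty subset of the vertex set. -/
structure IdxHypergraph (α ι : Type*) where
  verts : Finset α
  edges : Finset ι
  inc : ι → Finset α
  inc_nonempty : ∀ i ∈ edges, (inc i).Nonempty
  inc_sub : ∀ i ∈ edges, inc i ⊆ verts

namespace IdxHypergraph

variable {α ι : Type*}

/-- `u` and `v` are connected via a sequence of edges from `E'` in which consecutive
edges share a vertex. -/
def Conn (inc : ι → Finset α) (E' : Finset ι) (u v : α) : Prop :=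
  Relation.ReflTransGen (fun a b => ∃ i ∈ E', a ∈ inc i ∧ b ∈ inc i) u v

/-- The number of connected components of the hypergraph with vertex set `V'` and
edge set `E'` (isolated vertices form their own components). -/
noncomputable def numComponents (inc : ι → Finset α) (V' : Finset α) (E' : Finset ι) : ℕ :=
  (V'.image fun v => V'.filter fun u => Conn inc E' u v).card

/-- `(V₁, E₁)` is a subgraph of `(V₂, E₂)` (w.r.t. the incidence function `inc`). -/
def IsSubgraph (inc : ι → Finset α) (V₁ : Finset α) (E₁ : Finset ι)
    (V₂ : Finset α) (E₂ : Finset ι) : Prop :=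
  V₁ ⊆ V₂ ∧ E₁ ⊆ E₂ ∧ ∀ i ∈ E₁, inc i ⊆ V₁

/-- The hypergraph `(V', E')` is δ-cyclic: it has a subgraph with at least one edge
such that deleting any of its edges does not change the number of connected
components. -/
def IsDeltaCyclic (inc : ι → Finset α) (V' : Finset α) (E' : Finset ι) : Prop :=
  ∃ V'' E'', IsSubgraph inc V'' E'' V' E' ∧ E''.Nonempty ∧
    ∀ i ∈ E'', numComponents inc V'' E'' = numComponents inc V'' (E''.erase i)

/-- The hypergraph `(V', E')` is a δ-cycle: it is δ-cyclic and has no proper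
δ-cyclic subgraph. -/
def IsDeltaCycle (inc : ι → Finset α) (V' : Finset α) (E' : Finset ι) : Prop :=
  IsDeltaCyclic inc V' E' ∧
    ∀ V'' E'', IsSubgraph inc V'' E'' V' E' → (V'', E'') ≠ (V', E') →
      ¬ IsDeltaCyclic inc V'' E''

/-- A proper coloring of `G` with colors in `Fin x`: no edge has all its vertices
mapped to the same color. -/
def ProperColoring (G : IdxHypergraph α ι) (x : ℕ) (φ : G.verts → Fin x) : Prop :=
  ∀ i ∈ G.edges, ¬ ∃ c : Fin x, ∀ v : G.verts, (v : α) ∈ G.inc i → φ v = c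

/-- The number of proper `x`-colorings of `G`, i.e. the value `χ(G, x)` of the
chromatic polynomial. -/
noncomputable def chromaticCount (G : IdxHypergraph α ι) (x : ℕ) : ℕ :=
  Nat.card {φ : G.verts → Fin x // G.ProperColoring x φ}

section Order

variable [LinearOrder ι]

/-- `B` is a broken cycle of `G` w.r.t. the linear order on edges: `B` arises from
deleting the maximal edge of (the edge set of) a δ-cycle that is a subgraph of `G`. -/
def IsBrokenCycle (G : IdxHypergraph α ι) (B : Finset ι) : Prop :=
  ∃ V_C E_C e, IsSubgraph G.inc V_C E_C G.verts G.edges ∧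
    IsDeltaCycle G.inc V_C E_C ∧ e ∈ E_C ∧ (∀ i ∈ E_C, i ≤ e) ∧ B = E_C.erase e

/-- The edge `e` closes the broken cycle `B`: `B ∪ {e}` is the edge set of a
δ-cycle in `G`. -/
def Closes (G : IdxHypergraph α ι) (B : Finset ι) (e : ι) : Prop :=
  ∃ V_C, IsSubgraph G.inc V_C (insert e B) G.verts G.edges ∧
    IsDeltaCycle G.inc V_C (insert e B)

/-- `e` is the minimal edge closing the broken cycle `B`, i.e. `e = e(B)`. -/
def IsMinCloser (G : IdxHypergraph α ι) (B : Finset ι) (e : ι) : Prop :=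
  G.Closes B e ∧ ∀ e', G.Closes B e' → e ≤ e'

/-- `e` is the maximal edge closing the broken cycle `B`, i.e. `e = ē(B)`. -/
def IsMaxCloser (G : IdxHypergraph α ι) (B : Finset ι) (e : ι) : Prop :=
  G.Closes B e ∧ ∀ e', G.Closes B e' → e' ≤ e

/-- `A` contains at least one broken cycle, and
`e = m(A) = min { e(B) : B ∈ 𝔅(G, <), B ⊆ A }`. -/
def IsMinClosingEdge (G : IdxHypergraph α ι) (A : Finset ι) (e : ι) : Prop :=
  (∃ B, G.IsBrokenCycle B ∧ B ⊆ A ∧ G.IsMinCloser B e) ∧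
    ∀ B e', G.IsBrokenCycle B → B ⊆ A → G.IsMinCloser B e' → e ≤ e'

end Order

end IdxHypergraph

namespace IdxHypergraph

variable {α ι : Type*}

lemma conn_symm {inc : ι → Finset α} {E : Finset ι} {u v : α}
    (h : Conn inc E u v) : Conn inc E v u := by
  refine (@Relation.ReflTransGen.symmetric _ _ ⟨?_⟩).symm _ _ h
  rintro a b ⟨i, hi, ha, hb⟩
  exact ⟨i, hi, hb, ha⟩

lemma conn_mono {inc : ι → Finset α} {E E' : Finset ι} (hE : E ⊆ E') {u v : α}
    (h : Conn inc E u v) : Conn inc E' u v := by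
  refine Relation.ReflTransGen.mono ?_ _ _ h
  rintro a b ⟨i, hi, ha, hb⟩
  exact ⟨i, hE hi, ha, hb⟩

lemma conn_insert_iff [DecidableEq ι] {inc : ι → Finset α} {E : Finset ι} {e : ι}
    (h : ∀ u ∈ inc e, ∀ v ∈ inc e, Conn inc E u v) {u v : α} :
    Conn inc (insert e E) u v ↔ Conn inc E u v := by
  constructor
  · intro hc
    induction hc with
    | refl => exact Relation.ReflTransGen.refl
    | tail _ step ih =>
        obtain ⟨i, hi, ha, hb⟩ := step
        rcases Finset.mem_insert.1 hi with rfl | hi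
        · exact ih.trans (h _ ha _ hb)
        · exact ih.tail ⟨i, hi, ha, hb⟩
  · exact conn_mono (Finset.subset_insert _ _)

lemma numComponents_insert_of_conn [DecidableEq ι] {inc : ι → Finset α} {V : Finset α} {E : Finset ι} {e : ι}
    (h : ∀ u ∈ inc e, ∀ v ∈ inc e, Conn inc E u v) :
    numComponents inc V (insert e E) = numComponents inc V E := by
  unfold numComponents
  congr 1
  apply Finset.image_congr
  intro v _
  ext u
  simp only [Finset.mem_filter, conn_insert_iff h]

lemma conn_of_numComponents_eq {inc : ι → Finset α} {V : Finset α} {E E' : Finset ι}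
    (hE : E ⊆ E')
    (hnum : numComponents inc V E = numComponents inc V E')
    {u v : α} (hu : u ∈ V) (hv : v ∈ V) (h : Conn inc E' u v) :
    Conn inc E u v := by
  classical
  set cE : α → Finset α := fun w => V.filter fun x => Conn inc E x w with hcE
  set cE' : α → Finset α := fun w => V.filter fun x => Conn inc E' x w with hcE'
  set ψ : Finset α → Finset α := fun S => V.filter fun x => ∃ w ∈ S, Conn inc E' x w with hψ
  have hψc : ∀ w ∈ V, ψ (cE w) = cE' w := by
    intro w hw
    ext x
    simp only [hψ, hcE, hcE', Finset.mem_filter]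
    constructor
    · rintro ⟨hxV, y, ⟨hyV, hy⟩, hxy⟩
      exact ⟨hxV, hxy.trans (conn_mono hE hy)⟩
    · rintro ⟨hxV, hxw⟩
      exact ⟨hxV, w, ⟨hw, Relation.ReflTransGen.refl⟩, hxw⟩
  have himg : V.image cE' = (V.image cE).image ψ := by
    rw [Finset.image_image]
    apply Finset.image_congr
    intro w hw
    exact (hψc w hw).symm
  have hcard : ((V.image cE).image ψ).card = (V.image cE).card := by
    rw [← himg]
    exact hnum.symm
  have hinj : Set.InjOn ψ (V.image cE) := Finset.injOn_of_card_image_eq hcard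
  have hceq : cE u = cE v := by
    apply hinj (Finset.mem_image_of_mem _ hu) (Finset.mem_image_of_mem _ hv)
    rw [hψc u hu, hψc v hv]
    ext w
    simp only [hcE', Finset.mem_filter]
    constructor
    · rintro ⟨hwV, hwu⟩; exact ⟨hwV, hwu.trans h⟩
    · rintro ⟨hwV, hwv⟩; exact ⟨hwV, hwv.trans (conn_symm h)⟩
  have hv' : v ∈ cE u := by
    rw [hceq]
    simp only [hcE, Finset.mem_filter]
    exact ⟨hv, Relation.ReflTransGen.refl⟩
  simp only [hcE, Finset.mem_filter] at hv'
  exact conn_symm hv'.2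

lemma numComponents_eq_add {inc : ι → Finset α} {V W : Finset α} {E : Finset ι}
    (hWV : W ⊆ V) (hsup : ∀ i ∈ E, inc i ⊆ W) :
    numComponents inc V E = numComponents inc W E + (V \ W).card := by
  classical
  have hclassW : ∀ v ∈ W,
      (V.filter fun u => Conn inc E u v) = W.filter fun u => Conn inc E u v := by
    intro v hv
    ext u
    simp only [Finset.mem_filter]
    constructor
    · rintro ⟨huV, hc⟩
      refine ⟨?_, hc⟩
      rcases hc.cases_head with rfl | ⟨c, ⟨i, hi, hu', _⟩, _⟩
      · exact hv
      · exact hsup i hi hu'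
    · rintro ⟨huW, hc⟩
      exact ⟨hWV huW, hc⟩
  have hclassO : ∀ v ∈ V, v ∉ W → (V.filter fun u => Conn inc E u v) = {v} := by
    intro v hvV hvW
    ext u
    simp only [Finset.mem_filter, Finset.mem_singleton]
    constructor
    · rintro ⟨huV, hc⟩
      rcases hc.cases_tail with rfl | ⟨c, _, ⟨i, hi, _, hv'⟩⟩
      · rfl
      · exact absurd (hsup i hi hv') hvW
    · rintro rfl
      exact ⟨hvV, Relation.ReflTransGen.refl⟩
  have himg : (V.image fun v => V.filter fun u => Conn inc E u v)
      = (W.image fun v => W.filter fun u => Conn inc E u v)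
        ∪ ((V \ W).image fun v => ({v} : Finset α)) := by
    ext S
    simp only [Finset.mem_union, Finset.mem_image]
    constructor
    · rintro ⟨v, hv, rfl⟩
      by_cases hvW : v ∈ W
      · exact Or.inl ⟨v, hvW, (hclassW v hvW).symm⟩
      · exact Or.inr ⟨v, Finset.mem_sdiff.2 ⟨hv, hvW⟩, (hclassO v hv hvW).symm⟩
    · rintro (⟨v, hv, rfl⟩ | ⟨v, hv, rfl⟩)
      · exact ⟨v, hWV hv, hclassW v hv⟩
      · obtain ⟨hvV, hvW⟩ := Finset.mem_sdiff.1 hv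
        exact ⟨v, hvV, hclassO v hvV hvW⟩
  have hdisj : Disjoint (W.image fun v => W.filter fun u => Conn inc E u v)
      ((V \ W).image fun v => ({v} : Finset α)) := by
    rw [Finset.disjoint_left]
    intro S hS1 hS2
    obtain ⟨v, hv, rfl⟩ := Finset.mem_image.1 hS1
    obtain ⟨w, hw, hw2⟩ := Finset.mem_image.1 hS2
    have hvmem : v ∈ W.filter fun u => Conn inc E u v :=
      Finset.mem_filter.2 ⟨hv, Relation.ReflTransGen.refl⟩
    rw [← hw2, Finset.mem_singleton] at hvmem
    subst hvmem
    exact (Finset.mem_sdiff.1 hw).2 hv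
  have hsingle : ((V \ W).image fun v => ({v} : Finset α)).card = (V \ W).card :=
    Finset.card_image_of_injective _ Finset.singleton_injective
  unfold numComponents
  rw [himg, Finset.card_union_of_disjoint hdisj, hsingle]

lemma erase_eq_irrel {β : Type*} {i1 i2 : DecidableEq β} (s : Finset β) (a : β) :
    @Finset.erase β i1 s a = @Finset.erase β i2 s a := by congr!

lemma deltaCycle_invariance {inc : ι → Finset α} {V' : Finset α} {E' : Finset ι}
    (h : IsDeltaCycle inc V' E') :
    ∀ i ∈ E', numComponents inc V' E' = numComponents inc V' (E'.erase i) := by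
  obtain ⟨⟨V'', E'', hsub, hne, hinv⟩, hmin⟩ := h
  have heq : (V'', E'') = (V', E') := by
    by_contra hne'
    exact hmin V'' E'' hsub hne'
      ⟨V'', E'', ⟨Finset.Subset.refl _, Finset.Subset.refl _, hsub.2.2⟩, hne, hinv⟩
  rw [Prod.mk.injEq] at heq
  obtain ⟨rfl, rfl⟩ := heq
  exact hinv

end IdxHypergraph

open IdxHypergraph in
/-- Let `f` satisfy the cancellation condition, `D'` a set of broken cycles of `G`,
and `B` a broken cycle whose maximal closing edge `ē(B)` satisfies `ē(B) ≮ ē(B')`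
for all `B' ∈ D'`. Then the sum of `f(G, A)` over all `A ⊆ E` with `B ⊆ A` and
`B' ⊄ A` for all `B' ∈ D'` vanishes. -/
theorem sum_containing_brokenCycle_eq_zero {α ι : Type*} [LinearOrder ι] {M : Type*}
    [AddCommGroup M] (G : IdxHypergraph α ι)
    (f : Finset ι → M)
    (hf : ∀ A ⊆ G.edges, ∀ e ∈ G.edges, e ∉ A →
      numComponents G.inc G.verts A = numComponents G.inc G.verts (insert e A) →
      f A = - f (insert e A))
    (D' : Finset (Finset ι)) (hD' : ∀ B' ∈ D', G.IsBrokenCycle B')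
    (B : Finset ι) (hB : G.IsBrokenCycle B)
    (eB : ι) (heB : G.IsMaxCloser B eB)
    (hmax : ∀ B' ∈ D', ∀ e', G.IsMaxCloser B' e' → ¬ eB < e') :
    ∑ A ∈ G.edges.powerset.filter fun A => B ⊆ A ∧ ∀ B' ∈ D', ¬ B' ⊆ A, f A = 0 := by
  obtain ⟨hclose, _⟩ := heB
  obtain ⟨Vc, hsubc, hcyc⟩ := hclose
  have hEsub : insert eB B ⊆ G.edges := hsubc.2.1
  have heBE : eB ∈ G.edges := hEsub (Finset.mem_insert_self _ _)
  -- `eB ∉ B`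
  have heBB : eB ∉ B := by
    intro hmem
    have hBeq : insert eB B = B := Finset.insert_eq_self.2 hmem
    rw [hBeq] at hsubc hcyc
    obtain ⟨V_C, E_C, e, hsubC, hcycC, heC, _, hBdef⟩ := hB
    obtain ⟨V₂, E₂, hsub₂, hne₂, _⟩ := hcyc.1
    have hBne : B.Nonempty := hne₂.mono hsub₂.2.1
    have hBEC : B ⊆ E_C := hBdef ▸ Finset.erase_subset _ _
    set W : Finset α := B.biUnion G.inc with hW
    have hsupW : ∀ i ∈ B, G.inc i ⊆ W := fun i hi x hx =>
      Finset.mem_biUnion.2 ⟨i, hi, hx⟩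
    have hWVc : W ⊆ Vc := by
      intro x hx
      obtain ⟨i, hi, hxi⟩ := Finset.mem_biUnion.1 hx
      exact hsubc.2.2 i hi hxi
    have hWVC : W ⊆ V_C := by
      intro x hx
      obtain ⟨i, hi, hxi⟩ := Finset.mem_biUnion.1 hx
      exact hsubC.2.2 i (hBEC hi) hxi
    have hinvW : ∀ i ∈ B,
        numComponents G.inc W B =
          numComponents G.inc W (@Finset.erase ι (fun a b => Classical.propDecidable (a = b)) B i) := by
      intro i hi
      rw [erase_eq_irrel (i2 := inferInstance)]
      have h1 := deltaCycle_invariance hcyc i hi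
      rw [erase_eq_irrel (i2 := inferInstance)] at h1
      have h2 := numComponents_eq_add (inc := G.inc) (E := B) hWVc hsupW
      have h3 := numComponents_eq_add (inc := G.inc) (E := B.erase i) hWVc
        (fun j hj => hsupW j (Finset.mem_of_mem_erase hj))
      omega
    have hne : (W, B) ≠ (V_C, E_C) := by
      intro h
      have : B = E_C := congrArg Prod.snd h
      have : e ∈ B := this ▸ heC
      rw [hBdef] at this
      exact Finset.notMem_erase _ _ this
    exact hcycC.2 W B ⟨hWVC, hBEC, hsupW⟩ hne
      ⟨W, B, ⟨Finset.Subset.refl _, Finset.Subset.refl _, hsupW⟩, hBne, hinvW⟩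
  -- vertices of `inc eB` are pairwise connected via `B`
  have hconnB : ∀ u ∈ G.inc eB, ∀ v ∈ G.inc eB, Conn G.inc B u v := by
    have hinv := deltaCycle_invariance hcyc eB (Finset.mem_insert_self _ _)
    rw [erase_eq_irrel (i2 := inferInstance), Finset.erase_insert heBB] at hinv
    intro u hu v hv
    have huV : u ∈ Vc := hsubc.2.2 eB (Finset.mem_insert_self _ _) hu
    have hvV : v ∈ Vc := hsubc.2.2 eB (Finset.mem_insert_self _ _) hv
    exact conn_of_numComponents_eq (Finset.subset_insert _ _) hinv.symm huV hvV
      (Relation.ReflTransGen.single ⟨eB, Finset.mem_insert_self _ _, hu, hv⟩)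
  have hnum : ∀ A : Finset ι, B ⊆ A →
      numComponents G.inc G.verts A = numComponents G.inc G.verts (insert eB A) := by
    intro A hBA
    exact (numComponents_insert_of_conn
      (fun u hu v hv => conn_mono hBA (hconnB u hu v hv))).symm
  -- `eB` belongs to no broken cycle of `D'`
  have hD'eB : ∀ B' ∈ D', eB ∉ B' := by
    intro B' hB'mem hmem
    obtain ⟨V_C, E_C, e', hsub', hcyc', he', hmax', hBdef'⟩ := hD' B' hB'mem
    rw [hBdef'] at hmem
    have heBlt : eB < e' :=
      lt_of_le_of_ne (hmax' eB (Finset.mem_of_mem_erase hmem)) (Finset.ne_of_mem_erase hmem)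
    have hclose' : G.Closes (E_C.erase e') e' := by
      refine ⟨V_C, ?_, ?_⟩ <;> rw [Finset.insert_erase he'] <;> assumption
    set T := G.edges.filter (fun x => G.Closes (E_C.erase e') x) with hT
    have he'T : e' ∈ T := Finset.mem_filter.2 ⟨hsub'.2.1 he', hclose'⟩
    have hTne : T.Nonempty := ⟨e', he'T⟩
    have hm : G.IsMaxCloser (E_C.erase e') (T.max' hTne) := by
      constructor
      · exact (Finset.mem_filter.1 (T.max'_mem hTne)).2
      · intro x hx
        apply Finset.le_max'
        refine Finset.mem_filter.2 ⟨?_, hx⟩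
        obtain ⟨Vx, hsubx, _⟩ := hx
        exact hsubx.2.1 (Finset.mem_insert_self _ _)
    refine hmax B' hB'mem _ (hBdef' ▸ hm) ?_
    exact lt_of_lt_of_le heBlt (Finset.le_max' _ _ he'T)
  -- the involution
  refine Finset.sum_involution
    (fun A _ => if eB ∈ A then A.erase eB else insert eB A) ?_ ?_ ?_ ?_
  · intro A hA
    beta_reduce
    simp only [Finset.mem_filter, Finset.mem_powerset] at hA
    obtain ⟨hAE, hBA, _⟩ := hA
    by_cases hmem : eB ∈ A
    · rw [if_pos hmem]
      have hsub' : A.erase eB ⊆ G.edges := (Finset.erase_subset _ _).trans hAE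
      have hBA' : B ⊆ A.erase eB := Finset.subset_erase.2 ⟨hBA, heBB⟩
      have := hf (A.erase eB) hsub' eB heBE (Finset.notMem_erase _ _)
        (hnum _ hBA')
      rw [Finset.insert_erase hmem] at this
      rw [this]
      exact add_neg_cancel _
    · rw [if_neg hmem]
      rw [hf A hAE eB heBE hmem (hnum A hBA)]
      exact neg_add_cancel _
  · intro A _ _
    beta_reduce
    by_cases hmem : eB ∈ A
    · rw [if_pos hmem]
      intro h
      have hne := Finset.notMem_erase eB A
      rw [h] at hne
      exact hne hmem
    · rw [if_neg hmem]
      intro h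
      exact hmem (h ▸ Finset.mem_insert_self eB A)
  · intro A hA
    simp only [Finset.mem_filter, Finset.mem_powerset] at hA ⊢
    obtain ⟨hAE, hBA, hD'A⟩ := hA
    by_cases hmem : eB ∈ A
    · rw [if_pos hmem]
      refine ⟨(Finset.erase_subset _ _).trans hAE, Finset.subset_erase.2 ⟨hBA, heBB⟩, ?_⟩
      intro B' hB' hcon
      exact hD'A B' hB' (hcon.trans (Finset.erase_subset _ _))
    · rw [if_neg hmem]
      refine ⟨Finset.insert_subset heBE hAE, hBA.trans (Finset.subset_insert _ _), ?_⟩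
      intro B' hB' hcon
      exact hD'A B' hB'
        ((Finset.subset_insert_iff_of_notMem (hD'eB B' hB')).1 hcon)
  · intro A hA
    beta_reduce
    by_cases hmem : eB ∈ A
    · rw [if_pos hmem, if_neg (Finset.notMem_erase eB A), Finset.insert_erase hmem]
    · rw [if_neg hmem, if_pos (Finset.mem_insert_self eB A), Finset.erase_insert hmem]
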